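/- arXiv:1402.4706 — 15 statements merged into one kernel-verified Lean document; each statement's English description precedes it below -/
import Mathlib

section
/- Let R be a ring in which every left unit lifts modulo every left principal ideal (i.e., for all a, b, c ∈ R, if ab - 1 ∈ Rc then there exists a left invertible u ∈ R with b - u ∈ Rc). Then R is directly finite: for all a, b ∈ R, ab = 1 implies ba = 1. -/
theorem stmt_0 (R : Type*) [Ring R]
    (h : ∀ a b c : R, (∃ r : R, a * b - 1 = r * c) →
      ∃ u : R, (∃ v : R, v * u = 1) ∧ ∃ r : R, b - u = r * c) :
    ∀ a b : R, a * b = 1 → b * a = 1 := by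
  intro a b hab
  obtain ⟨u, ⟨v, hvu⟩, r, hr⟩ := h b a (1 - b * a) ⟨-1, by noncomm_ring⟩
  have hu : u = a - r * (1 - b * a) := by
    rw [← hr, sub_sub_cancel]
  have hub : u * b = 1 := by
    rw [hu]
    have key : (a - r * (1 - b * a)) * b = a * b - r * (b - b * (a * b)) := by
      noncomm_ring
    rw [key, hab]
    noncomm_ring
  have hvb : v = b := by
    calc v = v * (u * b) := by rw [hub, mul_one]
    _ = (v * u) * b := by rw [mul_assoc]
    _ = b := by rw [hvu, one_mul]
  have hbu : b * u = 1 := hvb ▸ hvu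
  have hau : a = u := by
    calc a = a * (b * u) := by rw [hbu, mul_one]
    _ = (a * b) * u := by rw [mul_assoc]
    _ = u := by rw [hab, one_mul]
  rw [hau, hbu]
end

section
/- Let R be a ring in which every right unit lifts modulo every right principal ideal (i.e., for all a, b, c ∈ R, if ab - 1 ∈ cR then there exists a right invertible u ∈ R with a - u ∈ cR). Then R is directly finite. -/
theorem stmt_1 (R : Type*) [Ring R]
    (h : ∀ a b c : R, (∃ r : R, a * b - 1 = c * r) →
      ∃ u : R, (∃ v : R, u * v = 1) ∧ ∃ r : R, a - u = c * r) :
    ∀ a b : R, a * b = 1 → b * a = 1 := by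
  intro a b hab
  obtain ⟨u, ⟨v, huv⟩, r, hr⟩ := h b a (1 - b * a) ⟨-1, by noncomm_ring⟩
  have hau : a * u = 1 := by
    have h0 : a * (b - u) = 0 := by
      rw [hr]
      calc a * ((1 - b * a) * r) = (1 - a * b) * (a * r) := by noncomm_ring
        _ = 0 := by rw [hab]; noncomm_ring
    have : a * b - a * u = 0 := by rw [← mul_sub]; exact h0
    have := sub_eq_zero.mp this
    rw [hab] at this; exact this.symm
  have hva : v = a := by
    calc v = (a * u) * v := by rw [hau, one_mul]
      _ = a * (u * v) := by rw [mul_assoc]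
      _ = a := by rw [huv, mul_one]
  have hua : u * a = 1 := hva ▸ huv
  have hub : u = b := by
    calc u = u * (a * b) := by rw [hab, mul_one]
      _ = (u * a) * b := by rw [mul_assoc]
      _ = b := by rw [hua, one_mul]
  rw [← hub, hua]
end

section
/- (Vasershtein's Lemma) Let R be a ring and a, b, c ∈ R with ab + c = 1. If there exists x ∈ R such that a + cx is invertible, then there exists y ∈ R such that b + yc is invertible. -/
theorem stmt_2 (R : Type*) [Ring R] (a b c : R) (h : a * b + c = 1)
    (hx : ∃ x : R, IsUnit (a + c * x)) : ∃ y : R, IsUnit (b + y * c) := by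
  obtain ⟨x, hxu⟩ := hx
  obtain ⟨u, hu⟩ := hxu
  have hc : c = 1 - a * b := eq_sub_of_add_eq' h
  subst hc
  set w : R := ((u⁻¹ : Rˣ) : R) with hwdef
  have hw1 : (a + (1 - a * b) * x) * w = 1 := by rw [← hu]; exact u.mul_inv
  have hw2 : w * (a + (1 - a * b) * x) = 1 := by rw [← hu]; exact u.inv_mul
  refine ⟨(1 - b * x) * w, ?_⟩
  have key1 : (b + (1 - b * x) * w * (1 - a * b)) * (x + (1 - x * b) * a) - 1 =
      (1 - b * x) * (w * (a + (1 - a * b) * x) - 1) * (1 - b * a) := by noncomm_ring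
  have key2 : (x + (1 - x * b) * a) * (b + (1 - b * x) * w * (1 - a * b)) - 1 =
      (1 - x * b) * ((a + (1 - a * b) * x) * w - 1) * (1 - a * b) := by noncomm_ring
  rw [hw2] at key1
  rw [hw1] at key2
  simp only [sub_self, mul_zero, zero_mul] at key1 key2
  exact ⟨⟨b + (1 - b * x) * w * (1 - a * b), x + (1 - x * b) * a,
    sub_eq_zero.mp key1, sub_eq_zero.mp key2⟩, rfl⟩
end

section
/- If a ring R has stable range one, then every left unit lifts modulo every left principal ideal: for all a, b, c ∈ R with ab - 1 ∈ Rc, there exists an invertible u ∈ R such that b - u ∈ Rc. -/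
/-- Vaserstein's lemma: if `a + (1 - a*x)*y` is a unit, then `a + y*(1 - x*a)` is a unit,
with explicit inverse `x + (1 - x*y) * u⁻¹ * (1 - a*x)`. -/
lemma vaserstein_swap {R : Type*} [Ring R] (a x y : R)
    (h : IsUnit (a + (1 - a*x)*y)) : IsUnit (a + y*(1 - x*a)) := by
  obtain ⟨u, hu⟩ := h
  have huw : (a + (1 - a*x)*y) * ↑u⁻¹ = 1 := by rw [← hu]; exact u.mul_inv
  have hwu : (↑u⁻¹ : R) * (a + (1 - a*x)*y) = 1 := by rw [← hu]; exact u.inv_mul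
  have h1 : (a + y*(1 - x*a)) * (x + (1 - x*y) * ↑u⁻¹ * (1 - a*x)) = 1 := by
    have e : (a + y*(1 - x*a)) * (x + (1 - x*y) * ↑u⁻¹ * (1 - a*x))
        = (a + y*(1 - x*a))*x + (1 - y*x) * ((a + (1 - a*x)*y) * ↑u⁻¹) * (1 - a*x) := by
      noncomm_ring
    rw [e, huw]; noncomm_ring
  have h2 : (x + (1 - x*y) * ↑u⁻¹ * (1 - a*x)) * (a + y*(1 - x*a)) = 1 := by
    have e : (x + (1 - x*y) * ↑u⁻¹ * (1 - a*x)) * (a + y*(1 - x*a))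
        = x*(a + y*(1 - x*a)) + (1 - x*y) * ((↑u⁻¹ : R) * (a + (1 - a*x)*y)) * (1 - x*a) := by
      noncomm_ring
    rw [e, hwu]; noncomm_ring
  exact isUnit_iff_exists.mpr ⟨_, h1, h2⟩

theorem stmt_3 (R : Type*) [Ring R]
    (hsr : ∀ a x b : R, a * x + b = 1 → ∃ y : R, IsUnit (a + b * y)) :
    ∀ a b c : R, (∃ r : R, a * b - 1 = r * c) →
      ∃ u : R, IsUnit u ∧ ∃ r : R, b - u = r * c := by
  rintro a b c ⟨r, hr⟩
  obtain ⟨y, hy⟩ := hsr b a (1 - b*a) (by noncomm_ring)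
  have hv := vaserstein_swap b a y hy
  have hab : (1 : R) - a*b = -(r*c) := by
    rw [← hr]; noncomm_ring
  have hrw : b + y*(1 - a*b) = b - (y*r)*c := by
    rw [hab]; noncomm_ring
  rw [hrw] at hv
  exact ⟨b - (y*r)*c, hv, y*r, by noncomm_ring⟩
end

section
/- If in a ring R every left unit lifts modulo every left principal ideal (for all a, b, c ∈ R, ab - 1 ∈ Rc implies there exists a left invertible u with b - u ∈ Rc), then R has stable range one. -/
/-- Key identity (right inverse): if `u = a + t(1-xa)` has right inverse `w`,
then `(a + (1-ax)t) * (x + (1-xa)w(1-tx)) = 1`. -/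
private lemma key_left {R : Type*} [Ring R] (a x t w : R)
    (h1 : (a + t * (1 - x * a)) * w = 1) :
    (a + (1 - a * x) * t) * (x + (1 - x * a) * (w * (1 - t * x))) = 1 := by
  have e1 : (a + (1 - a * x) * t) * (x + (1 - x * a) * (w * (1 - t * x)))
      = (a + (1 - a * x) * t) * x
        + (1 - a * x) * (((a + t * (1 - x * a)) * w) * (1 - t * x)) := by
    noncomm_ring
  rw [e1, h1]
  noncomm_ring

/-- Key identity (left inverse). -/
private lemma key_right {R : Type*} [Ring R] (a x t w : R)
    (h2 : w * (a + t * (1 - x * a)) = 1) :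
    (x + (1 - x * a) * (w * (1 - t * x))) * (a + (1 - a * x) * t) = 1 := by
  have e2 : (x + (1 - x * a) * (w * (1 - t * x))) * (a + (1 - a * x) * t)
      = x * (a + (1 - a * x) * t)
        + (1 - x * a) * ((w * (a + t * (1 - x * a))) * (1 - x * t)) := by
    noncomm_ring
  rw [e2, h2]
  noncomm_ring

/-- Under the lifting hypothesis, every left-invertible element is a unit. -/
private lemma left_inv_two_sided {R : Type*} [Ring R]
    (h : ∀ a b c : R, (∃ r : R, a * b - 1 = r * c) →
      ∃ u : R, (∃ v : R, v * u = 1) ∧ ∃ r : R, b - u = r * c)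
    (u v : R) (hvu : v * u = 1) : ∃ w : R, u * w = 1 ∧ w * u = 1 := by
  obtain ⟨u', ⟨v', hv'⟩, r, hr⟩ := h u v (1 - u * v) ⟨-1, by noncomm_ring⟩
  have hu' : u' = v - r * (1 - u * v) := by rw [← hr]; noncomm_ring
  have hu'u : u' * u = 1 := by
    calc u' * u = (v - r * (1 - u * v)) * u := by rw [hu']
      _ = v * u - r * (u - u * (v * u)) := by noncomm_ring
      _ = 1 - r * (u - u * 1) := by rw [hvu]
      _ = 1 := by noncomm_ring
  have hv'u : v' = u := by
    calc v' = v' * (u' * u) := by rw [hu'u, mul_one]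
      _ = (v' * u') * u := by rw [mul_assoc]
      _ = u := by rw [hv', one_mul]
  exact ⟨u', by rw [← hv'u]; exact hv', hu'u⟩

theorem stmt_4 (R : Type*) [Ring R]
    (h : ∀ a b c : R, (∃ r : R, a * b - 1 = r * c) →
      ∃ u : R, (∃ v : R, v * u = 1) ∧ ∃ r : R, b - u = r * c) :
    ∀ a x b : R, a * x + b = 1 → ∃ y : R, IsUnit (a + b * y) := by
  intro a x b hab
  obtain ⟨u, ⟨v, hvu⟩, t0, ht0⟩ := h x a (1 - x * a) ⟨-1, by noncomm_ring⟩
  obtain ⟨w, huw, hwu⟩ := left_inv_two_sided h u v hvu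
  -- ht0 : a - u = t0 * (1 - x * a)
  have hu : a + (-t0) * (1 - x * a) = u := by rw [neg_mul, ← ht0]; noncomm_ring
  have hb : b = 1 - a * x := by rw [← hab]; noncomm_ring
  subst hb
  have h1 : (a + (-t0) * (1 - x * a)) * w = 1 := by rw [hu]; exact huw
  have h2 : w * (a + (-t0) * (1 - x * a)) = 1 := by rw [hu]; exact hwu
  exact ⟨-t0, ⟨⟨a + (1 - a * x) * (-t0), x + (1 - x * a) * (w * (1 - (-t0) * x)),
    key_left a x (-t0) w h1, key_right a x (-t0) w h2⟩, rfl⟩⟩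
end

section
/- A ring R has stable range one if and only if every left unit lifts modulo every left principal ideal, i.e., for all a, b, c ∈ R with ab - 1 ∈ Rc there exists a left invertible u ∈ R with b - u ∈ Rc. -/
/-- Vaserstein-style symmetry lemma: if `a + (1-az)y` is invertible (with explicit
two-sided inverse `w`), then `a + y(1-za)` is invertible, with explicit inverse
`z + (1-zy) w (1-az)`. -/
private lemma key1 {R : Type*} [Ring R] (a z y w : R)
    (h1 : (a + (1 - a*z)*y) * w = 1) (h2 : w * (a + (1 - a*z)*y) = 1) :
    IsUnit (a + y*(1 - z*a)) := by
  refine isUnit_iff_exists.mpr ⟨z + (1 - z*y)*(w*(1 - a*z)), ?_, ?_⟩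
  · have e : (a + y*(1 - z*a)) * (z + (1 - z*y)*(w*(1 - a*z)))
        = (1 - y*z) * (((a + (1 - a*z)*y) * w) - 1) * (1 - a*z) + 1 := by noncomm_ring
    rw [e, h1]; noncomm_ring
  · have e : (z + (1 - z*y)*(w*(1 - a*z))) * (a + y*(1 - z*a))
        = (1 - z*y) * ((w * (a + (1 - a*z)*y)) - 1) * (1 - z*a) + 1 := by noncomm_ring
    rw [e, h2]; noncomm_ring

/-- Mirror of `key1`. -/
private lemma key2 {R : Type*} [Ring R] (a z y w : R)
    (h1 : (a + y*(1 - z*a)) * w = 1) (h2 : w * (a + y*(1 - z*a)) = 1) :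
    IsUnit (a + (1 - a*z)*y) := by
  refine isUnit_iff_exists.mpr ⟨z + (1 - z*a)*(w*(1 - y*z)), ?_, ?_⟩
  · have e : (a + (1 - a*z)*y) * (z + (1 - z*a)*(w*(1 - y*z)))
        = (1 - a*z) * (((a + y*(1 - z*a)) * w) - 1) * (1 - y*z) + 1 := by noncomm_ring
    rw [e, h1]; noncomm_ring
  · have e : (z + (1 - z*a)*(w*(1 - y*z))) * (a + (1 - a*z)*y)
        = (1 - z*a) * ((w * (a + y*(1 - z*a))) - 1) * (1 - z*y) + 1 := by noncomm_ring
    rw [e, h2]; noncomm_ring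

theorem stmt_5 (R : Type*) [Ring R] :
    (∀ a x b : R, a * x + b = 1 → ∃ y : R, IsUnit (a + b * y)) ↔
    (∀ a b c : R, (∃ r : R, a * b - 1 = r * c) →
      ∃ u : R, (∃ v : R, v * u = 1) ∧ ∃ r : R, b - u = r * c) := by
  constructor
  · intro H a b c hrc
    obtain ⟨r, hr⟩ := hrc
    obtain ⟨y, hy⟩ := H b a (1 - b*a) (by noncomm_ring)
    -- hy : IsUnit (b + (1 - b*a)*y)
    obtain ⟨v₀, hv₀⟩ := hy
    have h1 : (b + (1 - b*a)*y) * ↑v₀⁻¹ = 1 := by rw [← hv₀]; exact v₀.mul_inv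
    have h2 : (↑v₀⁻¹ : R) * (b + (1 - b*a)*y) = 1 := by rw [← hv₀]; exact v₀.inv_mul
    have hu : IsUnit (b + y*(1 - a*b)) := key1 b a y _ h1 h2
    have heq : b + y*(1 - a*b) = b - y*(r*c) := by rw [← hr]; noncomm_ring
    rw [heq] at hu
    obtain ⟨u₀, hu₀⟩ := hu
    refine ⟨b - y*(r*c), ⟨↑u₀⁻¹, ?_⟩, ⟨y*r, by noncomm_ring⟩⟩
    rw [← hu₀]; exact u₀.inv_mul
  · intro H a x b hab
    -- Dedekind-finiteness
    have df : ∀ p q : R, p*q = 1 → q*p = 1 := by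
      intro p q hpq
      obtain ⟨u, ⟨v, hvu⟩, s, hs⟩ := H q p (1 - q*p) ⟨-1, by noncomm_ring⟩
      have hu : u = p - s*(1 - q*p) := by rw [← hs]; noncomm_ring
      have huq : u * q = 1 := by
        have e : u * q = p*q - s*(q - q*(p*q)) := by rw [hu]; noncomm_ring
        rw [hpq] at e
        rw [e]; noncomm_ring
      have hvq : v = q := by
        calc v = v*(u*q) := by rw [huq, mul_one]
          _ = (v*u)*q := by rw [mul_assoc]
          _ = q := by rw [hvu, one_mul]
      have hqu : q*u = 1 := by rw [← hvq]; exact hvu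
      have hpu : p = u := by
        calc p = p*(q*u) := by rw [hqu, mul_one]
          _ = (p*q)*u := by rw [mul_assoc]
          _ = u := by rw [hpq, one_mul]
      rw [hpu]; exact hqu
    obtain ⟨u, ⟨v, hvu⟩, s, hs⟩ := H x a (1 - x*a) ⟨-1, by noncomm_ring⟩
    -- hs : a - u = s*(1 - x*a)
    have huv : u * v = 1 := df v u hvu
    have hu : a + (-s)*(1 - x*a) = u := by rw [neg_mul, ← hs]; noncomm_ring
    have h1 : (a + (-s)*(1 - x*a)) * v = 1 := by rw [hu]; exact huv
    have h2 : v * (a + (-s)*(1 - x*a)) = 1 := by rw [hu]; exact hvu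
    have hk := key2 a x (-s) v h1 h2
    have hb : (1 : R) - a*x = b := by rw [← hab]; noncomm_ring
    rw [hb] at hk
    exact ⟨-s, hk⟩
end

section
/- A ring R has stable range one if and only if every right unit lifts modulo every right principal ideal, i.e., for all a, b, c ∈ R with ab - 1 ∈ cR there exists a right invertible u ∈ R with a - u ∈ cR. -/
theorem stmt_6 (R : Type*) [Ring R] :
    (∀ a x b : R, a * x + b = 1 → ∃ y : R, IsUnit (a + b * y)) ↔
    (∀ a b c : R, (∃ r : R, a * b - 1 = c * r) →
      ∃ u : R, (∃ v : R, u * v = 1) ∧ ∃ r : R, a - u = c * r) := by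
  constructor
  · intro H a b c ⟨r, hr⟩
    obtain ⟨y, hy⟩ := H a b (-(c * r)) (by
      have : a * b - c * r = 1 := by rw [← hr]; noncomm_ring
      rw [← this]; noncomm_ring)
    refine ⟨a + -(c * r) * y, ⟨hy.unit.inv, hy.unit.val_inv⟩, r * y, ?_⟩
    noncomm_ring
  · intro H a x b hab
    obtain ⟨t, ⟨s, hts⟩, r, htr⟩ := H a x b ⟨-1, by
      have : a * x - 1 = -b := by rw [← hab]; noncomm_ring
      rw [this]; noncomm_ring⟩
    obtain ⟨u, ⟨w, huw⟩, q, hq⟩ := H s t (s * t - 1) ⟨1, by rw [mul_one]⟩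
    have hueq : u = s - (s * t - 1) * q := by rw [← hq]; noncomm_ring
    have h1 : t * (s * t - 1) = 0 := by
      have : t * (s * t) = t := by rw [← mul_assoc, hts, one_mul]
      rw [mul_sub, this, mul_one, sub_self]
    have htu : t * u = 1 := by
      rw [hueq, mul_sub, ← mul_assoc, h1, zero_mul, sub_zero, hts]
    have hwt : w = t := by
      calc w = (t * u) * w := by rw [htu, one_mul]
        _ = t * (u * w) := by rw [mul_assoc]
        _ = t := by rw [huw, mul_one]
    have hut : u * t = 1 := by rw [← hwt]; exact huw
    refine ⟨-r, ?_⟩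
    have hat : a + b * -r = t := by
      have := htr
      rw [sub_eq_iff_eq_add] at this
      rw [this]; noncomm_ring
    rw [hat]
    exact ⟨⟨t, u, htu, hut⟩, rfl⟩
end

section
/- Let R be a ring in which every left principal ideal is the left annihilator of some element (for every y ∈ R there exists a ∈ R with Ry = ann_l(a) = {r ∈ R : ra = 0}). If R is left uniquely generated, then R has stable range one. -/
theorem stmt_7 (R : Type*) [Ring R]
    (hann : ∀ y : R, ∃ a : R, ∀ r : R, (∃ s : R, r = s * y) ↔ r * a = 0)
    (hug : ∀ a b : R, (∀ r : R, (∃ s : R, r = s * a) ↔ (∃ s : R, r = s * b)) →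
      ∃ u : R, IsUnit u ∧ a = u * b) :
    ∀ a x b : R, a * x + b = 1 → ∃ y : R, IsUnit (a + b * y) := by
  intro a x b hab
  obtain ⟨c, hc⟩ := hann (1 - x * a)
  -- R (a*c) = R c
  have hRac : ∀ r : R, (∃ s : R, r = s * (a * c)) ↔ (∃ s : R, r = s * c) := by
    intro r
    constructor
    · rintro ⟨s, rfl⟩
      exact ⟨s * a, by rw [mul_assoc]⟩
    · rintro ⟨s, rfl⟩
      have h0 : (s - s * x * a) * c = 0 :=
        (hc (s - s * x * a)).mp ⟨s, by noncomm_ring⟩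
      refine ⟨s * x, ?_⟩
      have h1 : s * c - s * x * (a * c) = 0 := by
        rw [← h0]; noncomm_ring
      exact sub_eq_zero.mp h1
  obtain ⟨u, hu, hac⟩ := hug (a * c) c hRac
  have h0 : (a - u) * c = 0 := by rw [sub_mul, ← hac, sub_self]
  obtain ⟨e, he⟩ := (hc (a - u)).mpr h0
  have hb : b = 1 - a * x := by rw [← hab]; noncomm_ring
  subst hb
  have key : u = a - e * (1 - x * a) := by rw [← he]; noncomm_ring
  obtain ⟨uu, huu⟩ := hu
  have hU : (↑uu⁻¹ : R) * u = 1 := by rw [← huu]; exact uu.inv_mul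
  have hU' : u * (↑uu⁻¹ : R) = 1 := by rw [← huu]; exact uu.mul_inv
  refine ⟨-e, ?_⟩
  have hvp : (a + (1 - a * x) * (-e)) * (1 - x * a) = (1 - a * x) * u := by
    rw [key]; noncomm_ring
  have hkv : (1 + e * x) * (a + (1 - a * x) * (-e)) = u * (1 + x * e) := by
    rw [key]; noncomm_ring
  refine ⟨⟨a + (1 - a * x) * (-e), x + (1 - x * a) * ↑uu⁻¹ * (1 + e * x), ?_, ?_⟩, rfl⟩
  · calc (a + (1 - a * x) * (-e)) * (x + (1 - x * a) * ↑uu⁻¹ * (1 + e * x))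
        = (a + (1 - a * x) * (-e)) * x
          + ((a + (1 - a * x) * (-e)) * (1 - x * a)) * (↑uu⁻¹ * (1 + e * x)) := by
          noncomm_ring
      _ = (a + (1 - a * x) * (-e)) * x
          + ((1 - a * x) * u) * (↑uu⁻¹ * (1 + e * x)) := by rw [hvp]
      _ = (a + (1 - a * x) * (-e)) * x
          + (1 - a * x) * ((u * ↑uu⁻¹) * (1 + e * x)) := by noncomm_ring
      _ = (a + (1 - a * x) * (-e)) * x
          + (1 - a * x) * (1 * (1 + e * x)) := by rw [hU']
      _ = 1 := by noncomm_ring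
  · calc (x + (1 - x * a) * ↑uu⁻¹ * (1 + e * x)) * (a + (1 - a * x) * (-e))
        = x * (a + (1 - a * x) * (-e))
          + ((1 - x * a) * ↑uu⁻¹) * ((1 + e * x) * (a + (1 - a * x) * (-e))) := by
          noncomm_ring
      _ = x * (a + (1 - a * x) * (-e))
          + ((1 - x * a) * ↑uu⁻¹) * (u * (1 + x * e)) := by rw [hkv]
      _ = x * (a + (1 - a * x) * (-e))
          + (1 - x * a) * ((↑uu⁻¹ * u) * (1 + x * e)) := by noncomm_ring
      _ = x * (a + (1 - a * x) * (-e))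
          + (1 - x * a) * (1 * (1 + x * e)) := by rw [hU]
      _ = 1 := by noncomm_ring
end

section
/- If a ring R has stable range one, then R is right uniquely generated: for all a, b ∈ R, aR = bR implies there exists a unit u ∈ R with a = bu. -/
theorem stmt_9 (R : Type*) [Ring R]
    (hsr : ∀ a x b : R, a * x + b = 1 → ∃ y : R, IsUnit (a + b * y)) :
    ∀ a b : R, (∀ r : R, (∃ s : R, r = a * s) ↔ (∃ s : R, r = b * s)) →
      ∃ u : R, IsUnit u ∧ a = b * u := by
  intro a b h
  obtain ⟨s, hs⟩ := (h a).mp ⟨1, (mul_one a).symm⟩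
  obtain ⟨t, ht⟩ := (h b).mpr ⟨1, (mul_one b).symm⟩
  obtain ⟨y, hy⟩ := hsr s t (1 - s * t) (by noncomm_ring)
  refine ⟨s + (1 - s * t) * y, hy, ?_⟩
  have hb : b * (s * t) = b := by rw [← mul_assoc, ← hs, ← ht]
  calc a = b * s + (b - b * (s * t)) * y := by rw [hb]; simp [hs]
    _ = b * (s + (1 - s * t) * y) := by noncomm_ring
end

section
/- A left quasi-morphic ring R has stable range one if and only if R is left uniquely generated. -/
section vaserstein

variable {R : Type*} [Ring R]

/-- Vaserstein-type swap: if `a + (1-ax)t` is a unit, so is `a + t(1-xa)`. -/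
private lemma unit_swap₁ (a x t : R) (h : IsUnit (a + (1 - a*x)*t)) :
    IsUnit (a + t*(1 - x*a)) := by
  obtain ⟨w, hw⟩ := h
  refine isUnit_iff_exists.mpr ⟨x + (1 - x*t) * ((↑w⁻¹ : R) * (1 - a*x)), ?_, ?_⟩
  · have e1 : (a + t*(1 - x*a)) * (1 - x*t) = (1 - t*x) * (w : R) := by
      rw [hw]; noncomm_ring
    have e2 : ((w : R)) * (↑w⁻¹ : R) = 1 := w.mul_inv
    calc (a + t*(1-x*a)) * (x + (1 - x*t) * ((↑w⁻¹ : R) * (1 - a*x)))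
        = (a + t*(1-x*a))*x + ((a + t*(1-x*a)) * (1 - x*t)) * (↑w⁻¹ : R) * (1-a*x) := by
          noncomm_ring
      _ = (a + t*(1-x*a))*x + ((1 - t*x) * (w : R)) * (↑w⁻¹ : R) * (1-a*x) := by rw [e1]
      _ = (a + t*(1-x*a))*x + (1 - t*x) * ((w : R) * (↑w⁻¹ : R)) * (1-a*x) := by noncomm_ring
      _ = (a + t*(1-x*a))*x + (1 - t*x) * 1 * (1-a*x) := by rw [e2]
      _ = 1 := by noncomm_ring
  · have e1 : (1 - a*x) * (a + t*(1 - x*a)) = (w : R) * (1 - x*a) := by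
      rw [hw]; noncomm_ring
    have e2 : (↑w⁻¹ : R) * ((w : R)) = 1 := w.inv_mul
    calc (x + (1 - x*t) * ((↑w⁻¹ : R) * (1 - a*x))) * (a + t*(1-x*a))
        = x*(a + t*(1-x*a)) + (1 - x*t) * (↑w⁻¹ : R) * ((1 - a*x) * (a + t*(1-x*a))) := by
          noncomm_ring
      _ = x*(a + t*(1-x*a)) + (1 - x*t) * (↑w⁻¹ : R) * ((w : R) * (1 - x*a)) := by rw [e1]
      _ = x*(a + t*(1-x*a)) + (1 - x*t) * ((↑w⁻¹ : R) * (w : R)) * (1 - x*a) := by noncomm_ring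
      _ = x*(a + t*(1-x*a)) + (1 - x*t) * 1 * (1 - x*a) := by rw [e2]
      _ = 1 := by noncomm_ring

/-- Mirror swap: if `a + t(1-xa)` is a unit, so is `a + (1-ax)t`. -/
private lemma unit_swap₂ (a x t : R) (h : IsUnit (a + t*(1 - x*a))) :
    IsUnit (a + (1 - a*x)*t) := by
  obtain ⟨w, hw⟩ := h
  refine isUnit_iff_exists.mpr ⟨x + (1 - x*a) * ((↑w⁻¹ : R) * (1 - t*x)), ?_, ?_⟩
  · have e1 : (a + (1 - a*x)*t) * (1 - x*a) = (1 - a*x) * (w : R) := by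
      rw [hw]; noncomm_ring
    have e2 : ((w : R)) * (↑w⁻¹ : R) = 1 := w.mul_inv
    calc (a + (1 - a*x)*t) * (x + (1 - x*a) * ((↑w⁻¹ : R) * (1 - t*x)))
        = (a + (1 - a*x)*t)*x + ((a + (1 - a*x)*t) * (1 - x*a)) * (↑w⁻¹ : R) * (1 - t*x) := by
          noncomm_ring
      _ = (a + (1 - a*x)*t)*x + ((1 - a*x) * (w : R)) * (↑w⁻¹ : R) * (1 - t*x) := by rw [e1]
      _ = (a + (1 - a*x)*t)*x + (1 - a*x) * ((w : R) * (↑w⁻¹ : R)) * (1 - t*x) := by noncomm_ring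
      _ = (a + (1 - a*x)*t)*x + (1 - a*x) * 1 * (1 - t*x) := by rw [e2]
      _ = 1 := by noncomm_ring
  · have e1 : (1 - t*x) * (a + (1 - a*x)*t) = (w : R) * (1 - x*t) := by
      rw [hw]; noncomm_ring
    have e2 : (↑w⁻¹ : R) * ((w : R)) = 1 := w.inv_mul
    calc (x + (1 - x*a) * ((↑w⁻¹ : R) * (1 - t*x))) * (a + (1 - a*x)*t)
        = x*(a + (1 - a*x)*t) + (1 - x*a) * (↑w⁻¹ : R) * ((1 - t*x) * (a + (1 - a*x)*t)) := by
          noncomm_ring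
      _ = x*(a + (1 - a*x)*t) + (1 - x*a) * (↑w⁻¹ : R) * ((w : R) * (1 - x*t)) := by rw [e1]
      _ = x*(a + (1 - a*x)*t) + (1 - x*a) * ((↑w⁻¹ : R) * (w : R)) * (1 - x*t) := by noncomm_ring
      _ = x*(a + (1 - a*x)*t) + (1 - x*a) * 1 * (1 - x*t) := by rw [e2]
      _ = 1 := by noncomm_ring

end vaserstein

theorem stmt_10 (R : Type*) [Ring R]
    (hqm1 : ∀ y : R, ∃ a : R, ∀ r : R, (∃ s : R, r = s * y) ↔ r * a = 0)
    (hqm2 : ∀ a : R, ∃ y : R, ∀ r : R, r * a = 0 ↔ (∃ s : R, r = s * y)) :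
    (∀ a x b : R, a * x + b = 1 → ∃ y : R, IsUnit (a + b * y)) ↔
    (∀ a b : R, (∀ r : R, (∃ s : R, r = s * a) ↔ (∃ s : R, r = s * b)) →
      ∃ u : R, IsUnit u ∧ a = u * b) := by
  constructor
  · -- stable range 1 → left uniquely generated
    intro hP a b hab
    obtain ⟨s, hs⟩ := (hab a).mp ⟨1, (one_mul a).symm⟩   -- a = s * b
    obtain ⟨t, ht⟩ := (hab b).mpr ⟨1, (one_mul b).symm⟩  -- b = t * a
    obtain ⟨v, hv⟩ := hqm2 a
    have hsta : (1 - s*t) * a = 0 := by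
      have h1 : a = s * (t * a) := by rw [← ht]; exact hs
      calc (1 - s*t) * a = a - s*(t*a) := by noncomm_ring
        _ = 0 := by rw [← h1]; noncomm_ring
    obtain ⟨q, hq⟩ := (hv _).mp hsta   -- 1 - s*t = q * v
    have hva : v * a = 0 := (hv v).mpr ⟨1, (one_mul v).symm⟩
    obtain ⟨τ, hτ⟩ := hP t s (1 - t*s) (by noncomm_ring)
    have hu : IsUnit (t + τ*(1 - s*t)) := unit_swap₁ t s τ hτ
    rw [hq] at hu
    obtain ⟨u, hu'⟩ := hu
    refine ⟨(↑u⁻¹ : R), (u⁻¹).isUnit, ?_⟩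
    have huab : (u : R) * a = b := by
      rw [hu']
      calc (t + τ*(q*v)) * a = t*a + τ*q*(v*a) := by noncomm_ring
        _ = t*a := by rw [hva]; noncomm_ring
        _ = b := ht.symm
    rw [← huab, ← mul_assoc, u.inv_mul, one_mul]
  · -- left uniquely generated → stable range 1
    intro hUG a x b h
    obtain ⟨e, he⟩ := hqm1 (1 - x*a)
    have hbe : (1 - x*a) * e = 0 := (he _).mp ⟨1, (one_mul _).symm⟩
    have hee : e = x * (a * e) := by
      have h0 : e - x*(a*e) = 0 := by
        calc e - x*(a*e) = (1 - x*a)*e := by noncomm_ring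
          _ = 0 := hbe
      have := sub_eq_zero.mp h0
      exact this
    obtain ⟨u, hu, hue⟩ := hUG (a*e) e (by
      intro r
      constructor
      · rintro ⟨c, rfl⟩
        exact ⟨c * a, by rw [mul_assoc]⟩
      · rintro ⟨c, rfl⟩
        exact ⟨c * x, by rw [mul_assoc, ← hee]⟩)
    -- hue : a*e = u*e
    have hae : (a - u) * e = 0 := by
      calc (a - u)*e = a*e - u*e := by noncomm_ring
        _ = 0 := by rw [hue]; noncomm_ring
    obtain ⟨c, hc⟩ := (he _).mpr hae   -- a - u = c * (1 - x*a)
    have key : a + (-c)*(1 - x*a) = u := by rw [neg_mul, ← hc]; noncomm_ring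
    have hQ : IsUnit (a + (-c)*(1 - x*a)) := by rw [key]; exact hu
    have hP' : IsUnit (a + (1 - a*x)*(-c)) := unit_swap₂ a x (-c) hQ
    have hb : b = 1 - a*x := by rw [← h]; noncomm_ring
    exact ⟨-c, by rw [hb]; exact hP'⟩
end

section
/- Every left uniquely generated ring is directly finite: if R is a ring such that Ra = Rb implies a = ub for some unit u, then ab = 1 implies ba = 1 for all a, b ∈ R. -/
theorem stmt_11 (R : Type*) [Ring R]
    (hug : ∀ a b : R, (∀ r : R, (∃ s : R, r = s * a) ↔ (∃ s : R, r = s * b)) →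
      ∃ u : R, IsUnit u ∧ a = u * b) :
    ∀ a b : R, a * b = 1 → b * a = 1 := by
  intro a b hab
  obtain ⟨u, hu, hb⟩ := hug b 1 (by
    intro r
    constructor
    · rintro ⟨s, rfl⟩; exact ⟨s * b, (mul_one _).symm⟩
    · rintro ⟨s, rfl⟩
      exact ⟨s * a, by rw [mul_assoc, hab]⟩)
  rw [mul_one] at hb
  subst hb
  obtain ⟨v, rfl⟩ := hu
  have : a = (↑v⁻¹ : R) := by
    have := congrArg (fun x => x * (↑v⁻¹ : R)) hab
    simpa [mul_assoc] using this
  rw [this]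
  simp
end

section
/- Every right uniquely generated ring is directly finite: if R is a ring such that aR = bR implies a = bu for some unit u, then ab = 1 implies ba = 1 for all a, b ∈ R. -/
theorem stmt_12 (R : Type*) [Ring R]
    (hug : ∀ a b : R, (∀ r : R, (∃ s : R, r = a * s) ↔ (∃ s : R, r = b * s)) →
      ∃ u : R, IsUnit u ∧ a = b * u) :
    ∀ a b : R, a * b = 1 → b * a = 1 := by
  intro a b hab
  obtain ⟨u, hu, ha⟩ := hug a 1 (by
    intro r
    constructor
    · rintro ⟨s, rfl⟩; exact ⟨a * s, by rw [one_mul]⟩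
    · rintro ⟨s, rfl⟩
      exact ⟨b * (1 * s), by rw [← mul_assoc, hab]; simp⟩)
  rw [one_mul] at ha
  subst ha
  obtain ⟨v, rfl⟩ := hu
  have hb : b = ((v⁻¹ : Rˣ) : R) := by
    rw [← one_mul b, ← v.inv_mul, mul_assoc, hab, mul_one]
  rw [hb]
  simp
end

section
/- Let R be a ring with stable range one and let a, b ∈ R with Ra = Rb. Writing a = xb and b = ya, one has (1 - yx)b = 0, and there exists t ∈ R such that u = x + t(1 - yx) is a unit satisfying a = ub. -/
theorem stmt_15 (R : Type*) [Ring R]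
    (hsr : ∀ x z : R, (∃ r s : R, r * x + s * z = 1) → ∃ t : R, IsUnit (x + t * z))
    (a b x y : R) (hRab : ∀ r : R, (∃ s : R, r = s * a) ↔ (∃ s : R, r = s * b))
    (hx : a = x * b) (hy : b = y * a) :
    (1 - y * x) * b = 0 ∧ ∃ t : R, IsUnit (x + t * (1 - y * x)) ∧ a = (x + t * (1 - y * x)) * b := by
  have h0 : (1 - y * x) * b = 0 := by
    have : y * (x * b) = b := by rw [← hx, ← hy]
    rw [sub_mul, one_mul, mul_assoc, this, sub_self]
  refine ⟨h0, ?_⟩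
  obtain ⟨t, ht⟩ := hsr x (1 - y * x) ⟨y, 1, by noncomm_ring⟩
  exact ⟨t, ht, by rw [add_mul, mul_assoc, h0, mul_zero, add_zero, hx]⟩
end

section
/- Let R be a ring and x, y ∈ R with Rx + Ry = R. Suppose Ry = ann_l(a) and R(xa) = ann_l(b) for some a, b ∈ R. Then ab = 0 and ann_l(b) = Ra = R(xa). -/
theorem stmt_16 (R : Type*) [Ring R] (x y a b : R)
    (hxy : ∃ r s : R, r * x + s * y = 1)
    (h1 : ∀ r : R, (∃ s : R, r = s * y) ↔ r * a = 0)
    (h2 : ∀ r : R, (∃ s : R, r = s * (x * a)) ↔ r * b = 0) :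
    a * b = 0 ∧ (∀ r : R, r * b = 0 ↔ (∃ s : R, r = s * a)) ∧
      (∀ r : R, (∃ s : R, r = s * a) ↔ (∃ s : R, r = s * (x * a))) := by
  obtain ⟨r, s, hrs⟩ := hxy
  have hya : y * a = 0 := (h1 y).mp ⟨1, (one_mul y).symm⟩
  have hxab : (x * a) * b = 0 := (h2 (x * a)).mp ⟨1, (one_mul _).symm⟩
  have ha : a = r * (x * a) := by
    have : (r * x + s * y) * a = a := by rw [hrs, one_mul]
    calc a = (r * x + s * y) * a := this.symm
    _ = r * (x * a) + s * (y * a) := by rw [add_mul, mul_assoc, mul_assoc]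
    _ = r * (x * a) := by rw [hya, mul_zero, add_zero]
  have hab : a * b = 0 := by
    calc a * b = r * ((x * a) * b) := by rw [← mul_assoc, ← ha]
    _ = 0 := by rw [hxab, mul_zero]
  refine ⟨hab, fun t => ⟨fun ht => ?_, fun ⟨s', hs'⟩ => by
    rw [hs', mul_assoc, hab, mul_zero]⟩, fun t => ⟨fun ⟨s', hs'⟩ => ?_, fun ⟨s', hs'⟩ => ?_⟩⟩
  · obtain ⟨s', hs'⟩ := (h2 t).mpr ht
    exact ⟨s' * x, by rw [hs', mul_assoc]⟩
  · exact ⟨s' * r, by rw [hs', mul_assoc, ← ha]⟩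
  · exact ⟨s' * x, by rw [hs', mul_assoc]⟩
end

section
/- If R is a ring in which every left unit lifts modulo every left principal ideal, then every left unit of R is invertible (a two-sided unit). -/
theorem stmt_18 (R : Type*) [Ring R]
    (h : ∀ a b c : R, (∃ r : R, a * b - 1 = r * c) →
      ∃ u : R, (∃ v : R, v * u = 1) ∧ ∃ r : R, b - u = r * c) :
    ∀ u : R, (∃ v : R, v * u = 1) → IsUnit u := by
  rintro u ⟨v, hv⟩
  obtain ⟨w, ⟨s, hs⟩, r, hr⟩ := h u v (1 - u * v) ⟨-1, by noncomm_ring⟩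
  have he : (1 - u * v) * u = 0 := by
    have h1 : u * v * u = u := by rw [mul_assoc, hv, mul_one]
    rw [sub_mul, one_mul, h1, sub_self]
  have hwu : w * u = 1 := by
    have h2 : (v - w) * u = r * ((1 - u * v) * u) := by rw [← mul_assoc, ← hr]
    rw [he, mul_zero, sub_mul] at h2
    have h3 := sub_eq_zero.mp h2
    rw [← h3, hv]
  have hsu : s = u := by
    calc s = s * (w * u) := by rw [hwu, mul_one]
    _ = (s * w) * u := by rw [mul_assoc]
    _ = u := by rw [hs, one_mul]
  exact ⟨⟨u, w, by rw [← hsu]; exact hs, hwu⟩, rfl⟩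
end
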